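/- Let X be a nonempty set and ρ ⊆ X × X a binary relation such that for every bijection g : X → X and all x, y ∈ X one has (x, y) ∈ ρ if and only if (g(x), g(y)) ∈ ρ. Then ρ is one of the following four relations: the empty relation ∅, the diagonal Δ_X = {(x, x) : x ∈ X}, the complement of the diagonal X² ∖ Δ_X, or the full relation X². Conversely, each of these four relations is invariant under all bijections of X. -/
import Mathlib


/-- A binary relation `ρ` on a nonempty set `X` is invariant under all bijections of `X`
(i.e. strongly reversible) if and only if `ρ` is the empty relation, the diagonal, the
complement of the diagonal, or the full relation. -/
theorem stmt_8 {X : Type*} [Nonempty X] (ρ : Set (X × X)) :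
    (∀ g : X ≃ X, ∀ x y : X, (x, y) ∈ ρ ↔ (g x, g y) ∈ ρ) ↔
      (ρ = ∅ ∨ ρ = {p : X × X | p.1 = p.2} ∨
        ρ = {p : X × X | p.1 ≠ p.2} ∨ ρ = Set.univ) := by
  classical
  constructor
  · intro h
    -- if one diagonal pair is in ρ, all are
    have hdiag : (∃ a : X, (a, a) ∈ ρ) → ∀ x : X, (x, x) ∈ ρ := by
      rintro ⟨a, ha⟩ x
      have := (h (Equiv.swap a x) a a).1 ha
      simpa using this
    -- if one off-diagonal pair is in ρ, all are
    have hoff : (∃ a b : X, a ≠ b ∧ (a, b) ∈ ρ) →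
        ∀ c d : X, c ≠ d → (c, d) ∈ ρ := by
      rintro ⟨a, b, hab, hmem⟩ c d hcd
      set b' := Equiv.swap a c b with hb'
      have hb'c : b' ≠ c := fun h' =>
        hab ((Equiv.swap a c).injective
          (by rw [← hb', h', Equiv.swap_apply_left])).symm
      let g : X ≃ X := (Equiv.swap a c).trans (Equiv.swap b' d)
      have hga : g a = c := by
        simp only [g, Equiv.trans_apply, Equiv.swap_apply_left]
        exact Equiv.swap_apply_of_ne_of_ne hb'c.symm hcd
      have hgb : g b = d := by
        simp only [g, Equiv.trans_apply, ← hb', Equiv.swap_apply_left]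
      have := (h g a b).1 hmem
      rwa [hga, hgb] at this
    by_cases hd : ∃ a : X, (a, a) ∈ ρ
    · by_cases ho : ∃ a b : X, a ≠ b ∧ (a, b) ∈ ρ
      · right; right; right
        ext ⟨x, y⟩
        simp only [Set.mem_univ, iff_true]
        by_cases hxy : x = y
        · subst hxy; exact hdiag hd x
        · exact hoff ho x y hxy
      · right; left
        ext ⟨x, y⟩
        simp only [Set.mem_setOf_eq]
        constructor
        · intro hm
          by_contra hxy
          exact ho ⟨x, y, hxy, hm⟩
        · intro hxy; subst hxy; exact hdiag hd x
    · by_cases ho : ∃ a b : X, a ≠ b ∧ (a, b) ∈ ρ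
      · right; right; left
        ext ⟨x, y⟩
        simp only [Set.mem_setOf_eq]
        constructor
        · intro hm hxy
          subst hxy
          exact hd ⟨x, hm⟩
        · exact hoff ho x y
      · left
        ext ⟨x, y⟩
        simp only [Set.mem_empty_iff_false, iff_false]
        intro hm
        by_cases hxy : x = y
        · subst hxy; exact hd ⟨x, hm⟩
        · exact ho ⟨x, y, hxy, hm⟩
  · rintro (rfl | rfl | rfl | rfl) g x y <;>
      simp [g.injective.eq_iff]
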